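/- Let T = cS with c ∈ Π, where S is a p-string of length n ≥ 1 ending with $, with $ occurring nowhere else in S. Then: (i) ⟦T⟧[1] = |Π|_S| + 1 if Left_S(c) = 0, and ⟦T⟧[1] = |Π|_{S[1:Left_S(c)]}| otherwise. (ii) For 1 ≤ p ≤ n, if S[p] ∈ Σ or p ≠ Right_S(S[p]), then ⟦T⟧[p+1] = ⟦S⟧[p]. (iii) If S[p] = a ∈ Π and p = Right_S(a), then ⟦T⟧[p+1] = |Π|_{S[p+1:n]}| + 1 if a = c; ⟦T⟧[p+1] = ⟦S⟧[p] + 1 if Left_S(c) = 0 or Left_S(a) < Left_S(c) ≤ Right_S(c) < Right_S(a); and ⟦T⟧[p+1] = ⟦S⟧[p] otherwise. -/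

import Mathlib

/-! Common framework: parameterized strings over static alphabet `σ` and
parameter alphabet `π`.  A p-string is a `List (σ ⊕ π)`. -/

variable {σ π : Type*}

instance instInhabSum [Inhabited σ] : Inhabited (σ ⊕ π) := ⟨Sum.inl default⟩

/-- one right rotation: the last character moves to the front -/
def rotR1 {α : Type*} (W : List α) : List α := W.rotate (W.length - 1)

/-- `rotR W i` is the `i`-th right rotation `Rot(W, i)` -/
def rotR {α : Type*} (W : List α) : ℕ → List α
  | 0 => W
  | i + 1 => rotR1 (rotR W i)

/-- 1-based access `W[i]` (junk default outside the range) -/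
def get1 {α : Type*} [Inhabited α] (W : List α) (i : ℕ) : α := W.getD (i - 1) default

/-- the prev-encoding `⟨T⟩`, a list over `σ ⊕ ℕ∞` -/
def prevEnc [DecidableEq σ] [DecidableEq π] (T : List (σ ⊕ π)) : List (σ ⊕ ℕ∞) :=
  (List.range T.length).map fun k =>
    match T[k]? with
    | none => Sum.inr ⊤
    | some (Sum.inl a) => Sum.inl a
    | some (Sum.inr b) =>
      match ((List.range k).filter fun j => T[j]? = some (Sum.inr b)).max? with
      | none => Sum.inr ⊤
      | some j => Sum.inr ((k - j : ℕ) : ℕ∞)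

/-- number of distinct parameter characters occurring in `W` -/
def distinctParams [DecidableEq π] (W : List (σ ⊕ π)) : ℕ :=
  (W.filterMap Sum.getRight?).dedup.length

/-- the encoding `⟦T⟧`, a list over `σ ⊕ ℕ`:  a static character is kept; a
parameter character at (1-based) position `i` is replaced by the number of
distinct parameter characters in `Rot(T, n-i)[1:ℓ]` where `ℓ` is the leftmost
occurrence position of `T[i]` in `Rot(T, n-i)`. -/
def encodeE [DecidableEq σ] [DecidableEq π] (T : List (σ ⊕ π)) : List (σ ⊕ ℕ) :=
  (List.range T.length).map fun k =>
    match T[k]? with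
    | none => Sum.inr 0
    | some (Sum.inl a) => Sum.inl a
    | some (Sum.inr b) =>
      let R := rotR T (T.length - (k + 1))
      Sum.inr (distinctParams (R.take (R.idxOf (Sum.inr b) + 1)))

/-- order on prev-encoding characters: every static character is smaller than
every element of `ℕ∞` (and `ℕ∞` carries its usual order with `∞` on top) -/
def pvlt [LT σ] : (σ ⊕ ℕ∞) → (σ ⊕ ℕ∞) → Prop
  | Sum.inl a, Sum.inl b => a < b
  | Sum.inl _, Sum.inr _ => True
  | Sum.inr _, Sum.inl _ => False
  | Sum.inr x, Sum.inr y => x < y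

/-- `T` is a p-string of length ≥ 1 ending with the static character `d`,
which occurs nowhere else in `T`. -/
def EndsWith [DecidableEq σ] [DecidableEq π] (T : List (σ ⊕ π)) (d : σ) : Prop :=
  1 ≤ T.length ∧ T.getLast? = some (Sum.inl d) ∧ T.count (Sum.inl d) = 1

/-- `RA` represents the parameterized rotation array `RA_T` (0-based indices:
`RA_T[i] = (RA ⟨i-1⟩).val + 1`): the prev-encodings of the rotations are listed
in strictly increasing lexicographic order. -/
def IsRA [LinearOrder σ] [DecidableEq π] (T : List (σ ⊕ π))
    (RA : Fin T.length ≃ Fin T.length) : Prop :=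
  ∀ i j : Fin T.length, i < j →
    List.Lex pvlt (prevEnc (rotR T ((RA i).val + 1))) (prevEnc (rotR T ((RA j).val + 1)))

/-- `LF` represents the LF mapping: `LF_T(i) = j` iff `T_{RA_T[i]+1} = T_{RA_T[j]}`. -/
def IsLF [LinearOrder σ] [DecidableEq π] (T : List (σ ⊕ π))
    (RA LF : Fin T.length ≃ Fin T.length) : Prop :=
  ∀ i : Fin T.length, rotR T ((RA i).val + 2) = rotR T ((RA (LF i)).val + 1)

/-- the pBWT array `L_T[i] = ⟦T_{RA_T[i]}⟧[n]` -/
def Larr [LinearOrder σ] [DecidableEq π] [Inhabited σ] (T : List (σ ⊕ π))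
    (RA : Fin T.length ≃ Fin T.length) (i : Fin T.length) : σ ⊕ ℕ :=
  get1 (encodeE (rotR T ((RA i).val + 1))) T.length

/-- the array `F_T[i] = ⟦T_{RA_T[i]}⟧[1]` -/
def Farr [LinearOrder σ] [DecidableEq π] [Inhabited σ] (T : List (σ ⊕ π))
    (RA : Fin T.length ≃ Fin T.length) (i : Fin T.length) : σ ⊕ ℕ :=
  get1 (encodeE (rotR T ((RA i).val + 1))) 1

/-- longest common prefix of two lists -/
def lcp {α : Type*} [DecidableEq α] : List α → List α → List α
  | a :: as, b :: bs => if a = b then a :: lcp as bs else []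
  | _, _ => []

/-- `lcp∞(X, Y)`: the number of `∞`'s in the longest common prefix of `X` and `Y` -/
def lcpInf [DecidableEq σ] (X Y : List (σ ⊕ ℕ∞)) : ℕ :=
  (lcp X Y).count (Sum.inr ⊤)

/-- the `∞`-LCP array (1-based): `LCP∞_T[i] = lcp∞(⟨T_{RA_T[i]}⟩, ⟨T_{RA_T[i+1]}⟩)`
for `1 ≤ i < n`, and `0` otherwise. -/
def LCPa [LinearOrder σ] [DecidableEq π] (T : List (σ ⊕ π))
    (RA : Fin T.length ≃ Fin T.length) (i : ℕ) : ℕ :=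
  if h : 1 ≤ i ∧ i < T.length then
    lcpInf (prevEnc (rotR T ((RA ⟨i - 1, by omega⟩).val + 1)))
           (prevEnc (rotR T ((RA ⟨i, h.2⟩).val + 1)))
  else 0

/-- parameterized match: a bijection on `σ ⊕ π` fixing all static characters
renames `S` into `T` -/
def PMatch (S T : List (σ ⊕ π)) : Prop :=
  ∃ f : (σ ⊕ π) ≃ (σ ⊕ π), (∀ a : σ, f (Sum.inl a) = Sum.inl a) ∧ S.map f = T

/-- leftmost (1-based) occurrence position of `c` in `W`, `0` if absent -/
def leftPos [DecidableEq σ] [DecidableEq π] (W : List (σ ⊕ π)) (c : σ ⊕ π) : ℕ :=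
  if W.contains c then W.idxOf c + 1 else 0

/-- rightmost (1-based) occurrence position of `c` in `W`, `0` if absent -/
def rightPos [DecidableEq σ] [DecidableEq π] (W : List (σ ⊕ π)) (c : σ ⊕ π) : ℕ :=
  if W.contains c then W.length - W.reverse.idxOf c else 0

section Helpers

variable {α : Type*} [DecidableEq α]

omit [DecidableEq α] in
lemma rotR_eq_rotate (W : List α) (i : ℕ) : rotR W i = W.rotate (i * (W.length - 1)) := by
  induction i with
  | zero => simp [rotR]
  | succ i ih =>
    rw [rotR, rotR1, ih, List.length_rotate, List.rotate_rotate]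
    congr 1
    ring

omit [DecidableEq α] in
lemma rotR_eq (W : List α) (i : ℕ) (h : i ≤ W.length) :
    rotR W i = W.drop (W.length - i) ++ W.take (W.length - i) := by
  rcases Nat.eq_zero_or_pos i with hi | hi
  · subst hi; simp [rotR]
  · have hlen : 1 ≤ W.length := le_trans hi h
    obtain ⟨m, hm⟩ : ∃ m, W.length = m + 1 := ⟨W.length - 1, by omega⟩
    obtain ⟨j, rfl⟩ : ∃ j, i = j + 1 := ⟨i - 1, by omega⟩
    have key : (j + 1) * (W.length - 1) = (W.length - (j + 1)) + W.length * ((j + 1) - 1) := by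
      have e1 : (j + 1) * m = j * m + m := by ring
      have e2 : (m + 1) * j = m * j + j := by ring
      have e3 : j * m = m * j := Nat.mul_comm _ _
      simp only [hm, Nat.add_sub_cancel]
      omega
    rw [rotR_eq_rotate, key, ← List.rotate_rotate]
    have h2 : (W.rotate (W.length - (j + 1))).length = W.length := W.length_rotate _
    have h3 := List.rotate_length_mul (W.rotate (W.length - (j + 1))) ((j + 1) - 1)
    rw [h2] at h3
    rw [h3, List.rotate_eq_drop_append_take (by omega)]

lemma mem_take_iff_indexOf {x : α} {l : List α} (hx : x ∈ l) (n : ℕ) :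
    x ∈ l.take n ↔ l.idxOf x < n := by
  constructor
  · intro h
    have h1 : l.idxOf x = (l.take n).idxOf x := by
      conv_lhs => rw [← List.take_append_drop n l]
      exact List.idxOf_append_of_mem h
    have h2 := List.idxOf_lt_length_iff.2 h
    rw [h1]
    calc (l.take n).idxOf x < (l.take n).length := h2
      _ ≤ n := by simp
  · intro h
    have hlt := List.idxOf_lt_length_iff.2 hx
    have hlt2 : l.idxOf x < (l.take n).length := by simp; omega
    have : (l.take n)[l.idxOf x]'hlt2 = x := by
      rw [List.getElem_take]; exact List.idxOf_get hlt
    exact this ▸ List.getElem_mem hlt2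

lemma indexOf_le_of_get? {x : α} {l : List α} {i : ℕ} (h : l[i]? = some x) :
    l.idxOf x ≤ i := by
  have hmem : x ∈ l := List.mem_of_getElem? h
  have h2 : x ∈ l.take (i + 1) := List.mem_of_getElem? (by rw [List.getElem?_take_of_lt (Nat.lt_succ_self i)]; exact h)
  have := (mem_take_iff_indexOf hmem (i + 1)).mp h2
  omega

lemma get?_rev_indexOf {x : α} {l : List α} (hx : x ∈ l) :
    l[l.length - 1 - l.reverse.idxOf x]? = some x := by
  have hx' : x ∈ l.reverse := by simpa using hx
  have hr : l.reverse.idxOf x < l.reverse.length := List.idxOf_lt_length_iff.2 hx'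
  have := List.idxOf_get hr
  rw [List.get_eq_getElem, List.getElem_reverse] at this
  rw [List.getElem?_eq_some_iff]
  exact ⟨by simp at hr ⊢; omega, by exact this⟩

lemma mem_drop_iff_rev {x : α} {l : List α} (hx : x ∈ l) (n : ℕ) :
    x ∈ l.drop n ↔ n < l.length - l.reverse.idxOf x := by
  have hx' : x ∈ l.reverse := by simpa using hx
  have hr : l.reverse.idxOf x < l.length := by
    have := List.idxOf_lt_length_iff.2 hx'; simpa using this
  have h1 : x ∈ l.drop n ↔ x ∈ (l.drop n).reverse := by simp
  rw [h1, List.reverse_drop, mem_take_iff_indexOf hx']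
  omega


omit [DecidableEq α] in
lemma my_beq_ext {β : Type*} (i1 i2 : BEq β)
    (h : ∀ a b, @BEq.beq _ i1 a b = @BEq.beq _ i2 a b) : i1 = i2 := by
  cases i1; cases i2; congr; funext a b; exact h a b

lemma rev_indexOf_lt {x : α} {l : List α} (hx : x ∈ l) :
    l.reverse.idxOf x < l.length := by
  have := List.idxOf_lt_length_iff.2 (List.mem_reverse.2 hx)
  simpa using this

variable {σ π : Type*} [DecidableEq σ] [DecidableEq π]

lemma bs1 (a b : σ) : (@BEq.beq _ Sum.instBEq (Sum.inl a : σ ⊕ π) (Sum.inl b)) = (a == b) := rfl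
lemma bs2 (a : σ) (b : π) : (@BEq.beq _ Sum.instBEq (Sum.inl a : σ ⊕ π) (Sum.inr b)) = false := rfl
lemma bs3 (a : π) (b : σ) : (@BEq.beq _ Sum.instBEq (Sum.inr a : σ ⊕ π) (Sum.inl b)) = false := rfl
lemma bs4 (a b : π) : (@BEq.beq _ Sum.instBEq (Sum.inr a : σ ⊕ π) (Sum.inr b)) = (a == b) := rfl

lemma beq_sum_eq : (Sum.instBEq : BEq (σ ⊕ π)) = instBEqOfDecidableEq := by
  refine my_beq_ext _ _ fun a b => ?_
  cases a <;> cases b <;>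
    rw [Bool.eq_iff_iff] <;>
    simp [bs1, bs2, bs3, bs4, beq_iff_eq]

lemma contains_iff_mem {c : σ ⊕ π} {W : List (σ ⊕ π)} :
    W.contains c = true ↔ c ∈ W := by
  rw [show (Sum.instBEq : BEq (σ ⊕ π)) = instBEqOfDecidableEq from beq_sum_eq]
  simp

lemma inr_mem_filterMap_iff {c : π} {W : List (σ ⊕ π)} :
    c ∈ W.filterMap Sum.getRight? ↔ Sum.inr c ∈ W := by
  rw [List.mem_filterMap]
  constructor
  · rintro ⟨a, ha, h2⟩
    cases a with
    | inl a => simp [Sum.getRight?] at h2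
    | inr b => simp [Sum.getRight?] at h2; subst h2; exact ha
  · intro h; exact ⟨Sum.inr c, h, rfl⟩

lemma distinctParams_eq_card (W : List (σ ⊕ π)) :
    distinctParams W = (W.filterMap Sum.getRight?).toFinset.card := by
  rw [distinctParams, List.card_toFinset]

lemma distinctParams_middle_of_mem {A B : List (σ ⊕ π)} {c : π}
    (h : Sum.inr c ∈ A ∨ Sum.inr c ∈ B) :
    distinctParams (A ++ Sum.inr c :: B) = distinctParams (A ++ B) := by
  rw [distinctParams_eq_card, distinctParams_eq_card]
  rw [List.filterMap_append, List.filterMap_append, List.filterMap_cons]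
  simp only [Sum.getRight?]
  rw [List.toFinset_append, List.toFinset_append, List.toFinset_cons,
    Finset.union_insert]
  rw [Finset.card_insert_of_mem]
  rw [Finset.mem_union, List.mem_toFinset, List.mem_toFinset,
    inr_mem_filterMap_iff, inr_mem_filterMap_iff]
  exact h

lemma distinctParams_middle_of_not_mem {A B : List (σ ⊕ π)} {c : π}
    (h : ¬(Sum.inr c ∈ A ∨ Sum.inr c ∈ B)) :
    distinctParams (A ++ Sum.inr c :: B) = distinctParams (A ++ B) + 1 := by
  rw [distinctParams_eq_card, distinctParams_eq_card]
  rw [List.filterMap_append, List.filterMap_append, List.filterMap_cons]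
  simp only [Sum.getRight?]
  rw [List.toFinset_append, List.toFinset_append, List.toFinset_cons,
    Finset.union_insert]
  rw [Finset.card_insert_of_notMem]
  rw [Finset.mem_union, List.mem_toFinset, List.mem_toFinset,
    inr_mem_filterMap_iff, inr_mem_filterMap_iff]
  exact h

lemma get1_encodeE_inl (T : List (σ ⊕ π)) (k : ℕ) (a : σ) [Inhabited σ]
    (h : T[k]? = some (Sum.inl a)) :
    get1 (encodeE T) (k + 1) = Sum.inl a := by
  have hk : k < T.length := by
    rw [List.getElem?_eq_some_iff] at h; exact h.1
  have h' : T[k]? = some (Sum.inl a) := h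
  rw [get1, Nat.add_sub_cancel, List.getD_eq_getElem?_getD, encodeE, List.getElem?_map,
    List.getElem?_range hk]
  simp [h, h']

lemma get1_encodeE_inr (T : List (σ ⊕ π)) (k : ℕ) (b : π) [Inhabited σ]
    (h : T[k]? = some (Sum.inr b)) :
    get1 (encodeE T) (k + 1) =
      Sum.inr (distinctParams ((rotR T (T.length - (k + 1))).take
        ((rotR T (T.length - (k + 1))).idxOf (Sum.inr b) + 1))) := by
  have hk : k < T.length := by
    rw [List.getElem?_eq_some_iff] at h; exact h.1
  have h' : T[k]? = some (Sum.inr b) := h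
  rw [get1, Nat.add_sub_cancel, List.getD_eq_getElem?_getD, encodeE, List.getElem?_map,
    List.getElem?_range hk]
  simp [h, h']

lemma leftPos_of_mem {c : σ ⊕ π} {W : List (σ ⊕ π)} (h : c ∈ W) :
    leftPos W c = W.idxOf c + 1 := by
  rw [leftPos, if_pos (contains_iff_mem.mpr h)]

lemma leftPos_of_not_mem {c : σ ⊕ π} {W : List (σ ⊕ π)} (h : c ∉ W) :
    leftPos W c = 0 := by
  rw [leftPos, if_neg]
  rw [contains_iff_mem]
  exact h

lemma rightPos_of_mem {c : σ ⊕ π} {W : List (σ ⊕ π)} (h : c ∈ W) :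
    rightPos W c = W.length - W.reverse.idxOf c := by
  rw [rightPos, if_pos (contains_iff_mem.mpr h)]

lemma leftPos_eq_zero_iff {c : σ ⊕ π} {W : List (σ ⊕ π)} :
    leftPos W c = 0 ↔ c ∉ W := by
  rcases Classical.em (c ∈ W) with h | h
  · rw [leftPos_of_mem h]; simp [h]
  · rw [leftPos_of_not_mem h]; simp [h]

lemma indexOf_lt_length' {x : σ ⊕ π} {l : List (σ ⊕ π)} (h : x ∈ l) :
    l.idxOf x < l.length := by
  rw [beq_sum_eq]
  letI : BEq (σ ⊕ π) := instBEqOfDecidableEq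
  exact List.idxOf_lt_length_iff.2 h

lemma mem_take_iff_indexOf' {x : σ ⊕ π} {l : List (σ ⊕ π)} (hx : x ∈ l) (n : ℕ) :
    x ∈ l.take n ↔ l.idxOf x < n := by
  rw [beq_sum_eq]
  exact mem_take_iff_indexOf hx n

lemma indexOf_le_of_get?' {x : σ ⊕ π} {l : List (σ ⊕ π)} {i : ℕ}
    (h : l[i]? = some x) : l.idxOf x ≤ i := by
  rw [beq_sum_eq]
  exact indexOf_le_of_get? h

lemma indexOf_append_of_mem' {x : σ ⊕ π} {l₁ l₂ : List (σ ⊕ π)} (h : x ∈ l₁) :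
    (l₁ ++ l₂).idxOf x = l₁.idxOf x := by
  rw [beq_sum_eq]
  letI : BEq (σ ⊕ π) := instBEqOfDecidableEq
  exact List.idxOf_append_of_mem h

lemma indexOf_append_of_not_mem' {x : σ ⊕ π} {l₁ l₂ : List (σ ⊕ π)} (h : x ∉ l₁) :
    (l₁ ++ l₂).idxOf x = l₁.length + l₂.idxOf x := by
  rw [beq_sum_eq]
  letI : BEq (σ ⊕ π) := instBEqOfDecidableEq
  exact List.idxOf_append_of_notMem h

lemma indexOf_cons_self' (x : σ ⊕ π) (l : List (σ ⊕ π)) :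
    (x :: l).idxOf x = 0 := by
  rw [beq_sum_eq]
  letI : BEq (σ ⊕ π) := instBEqOfDecidableEq
  exact List.idxOf_cons_self

lemma indexOf_cons_ne' {x y : σ ⊕ π} (l : List (σ ⊕ π)) (h : y ≠ x) :
    (y :: l).idxOf x = l.idxOf x + 1 := by
  rw [beq_sum_eq]
  letI : BEq (σ ⊕ π) := instBEqOfDecidableEq
  exact List.idxOf_cons_ne l h

lemma get?_rightPos {c : σ ⊕ π} {W : List (σ ⊕ π)} (h : c ∈ W) :
    W[rightPos W c - 1]? = some c := by
  rw [rightPos_of_mem h, beq_sum_eq, Nat.sub_right_comm]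
  exact get?_rev_indexOf h

lemma rightPos_pos {c : σ ⊕ π} {W : List (σ ⊕ π)} (h : c ∈ W) :
    1 ≤ rightPos W c := by
  rw [rightPos_of_mem h, beq_sum_eq]
  have := rev_indexOf_lt h
  omega

lemma rightPos_le_length {c : σ ⊕ π} {W : List (σ ⊕ π)} (h : c ∈ W) :
    rightPos W c ≤ W.length := by
  rw [rightPos_of_mem h, beq_sum_eq]
  omega

lemma mem_drop_iff_rightPos {c : σ ⊕ π} {W : List (σ ⊕ π)} (h : c ∈ W) (n : ℕ) :
    c ∈ W.drop n ↔ n < rightPos W c := by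
  rw [rightPos_of_mem h, beq_sum_eq]
  exact mem_drop_iff_rev h n

lemma leftPos_le_rightPos {c : σ ⊕ π} {W : List (σ ⊕ π)} (h : c ∈ W) :
    leftPos W c ≤ rightPos W c := by
  have h1 := indexOf_le_of_get?' (get?_rightPos h)
  have h2 := rightPos_pos h
  rw [leftPos_of_mem h]
  omega

end Helpers

/-- Let `T = cS` with `c ∈ Π`.  Then:
(i) `⟦T⟧[1] = |Π|_S| + 1` if `Left_S(c) = 0`, and `⟦T⟧[1] = |Π|_{S[1:Left_S(c)]}|` otherwise;
(ii) for `1 ≤ p ≤ n`, if `S[p] ∈ Σ` or `p ≠ Right_S(S[p])` then `⟦T⟧[p+1] = ⟦S⟧[p]`;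
(iii) if `S[p] = a ∈ Π` and `p = Right_S(a)` then `⟦T⟧[p+1] = |Π|_{S[p+1:n]}| + 1` if `a = c`;
`⟦T⟧[p+1] = ⟦S⟧[p] + 1` if `Left_S(c) = 0` or `Left_S(a) < Left_S(c) ≤ Right_S(c) < Right_S(a)`;
and `⟦T⟧[p+1] = ⟦S⟧[p]` otherwise. -/
theorem encode_cons_param [LinearOrder σ] [DecidableEq π] [Inhabited σ]
    (d : σ) (hd : ∀ a : σ, d ≤ a)
    (S : List (σ ⊕ π)) (hS : EndsWith S d)
    (cp : π) :
    (get1 (encodeE (Sum.inr cp :: S)) 1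
        = (if leftPos S (Sum.inr cp) = 0 then Sum.inr (distinctParams S + 1)
           else Sum.inr (distinctParams (S.take (leftPos S (Sum.inr cp)))) : σ ⊕ ℕ)) ∧
    (∀ p : ℕ, 1 ≤ p → p ≤ S.length →
      ((∃ a : σ, get1 S p = Sum.inl a) ∨ p ≠ rightPos S (get1 S p)) →
      get1 (encodeE (Sum.inr cp :: S)) (p + 1) = get1 (encodeE S) p) ∧
    (∀ p : ℕ, ∀ b : π, 1 ≤ p → p ≤ S.length →
      get1 S p = Sum.inr b → p = rightPos S (Sum.inr b) →
      ((b = cp →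
          get1 (encodeE (Sum.inr cp :: S)) (p + 1)
            = Sum.inr (distinctParams (S.drop p) + 1)) ∧
       (b ≠ cp →
          (leftPos S (Sum.inr cp) = 0 ∨
            (leftPos S (Sum.inr b) < leftPos S (Sum.inr cp) ∧
             leftPos S (Sum.inr cp) ≤ rightPos S (Sum.inr cp) ∧
             rightPos S (Sum.inr cp) < rightPos S (Sum.inr b))) →
          get1 (encodeE (Sum.inr cp :: S)) (p + 1)
            = Sum.map id (· + 1) (get1 (encodeE S) p)) ∧
       (b ≠ cp →
          ¬ (leftPos S (Sum.inr cp) = 0 ∨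
            (leftPos S (Sum.inr b) < leftPos S (Sum.inr cp) ∧
             leftPos S (Sum.inr cp) ≤ rightPos S (Sum.inr cp) ∧
             rightPos S (Sum.inr cp) < rightPos S (Sum.inr b))) →
          get1 (encodeE (Sum.inr cp :: S)) (p + 1) = get1 (encodeE S) p))) := by
  classical
  obtain ⟨hn, -, -⟩ := hS
  have hTlen : (Sum.inr cp :: S : List (σ ⊕ π)).length = S.length + 1 := by simp
  refine ⟨?_, ?_, ?_⟩
  · -- part (i)
    have hget : (Sum.inr cp :: S : List (σ ⊕ π))[0]? = some (Sum.inr cp) := rfl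
    have h1 := get1_encodeE_inr (Sum.inr cp :: S) 0 cp hget
    have hsub : (Sum.inr cp :: S : List (σ ⊕ π)).length - (0 + 1) = S.length := by simp
    rw [hsub] at h1
    have hR : rotR (Sum.inr cp :: S) S.length = S ++ [Sum.inr cp] := by
      rw [rotR_eq _ _ (by simp)]
      have e : (Sum.inr cp :: S : List (σ ⊕ π)).length - S.length = 1 := by simp
      rw [e]
      simp
    rw [hR] at h1
    norm_num at h1
    rw [h1]
    rcases Classical.em (Sum.inr cp ∈ S) with hm | hm
    · rw [if_neg (by rw [leftPos_of_mem hm]; omega)]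
      rw [leftPos_of_mem hm, indexOf_append_of_mem' hm,
        List.take_append_of_le_length (by have := indexOf_lt_length' hm; omega)]
    · rw [if_pos (leftPos_eq_zero_iff.mpr hm)]
      rw [indexOf_append_of_not_mem' hm]
      have e2 : S.length + ([Sum.inr cp] : List (σ ⊕ π)).idxOf (Sum.inr cp) + 1
          = S.length + 1 := by
        rw [indexOf_cons_self']
      rw [e2, show S.length + 1 = S.length + 1 from rfl]
      rw [show (S.length + 1 : ℕ) = S.length + 1 from rfl]
      rw [List.take_length_add_append (l₁ := S) (l₂ := [Sum.inr cp]) 1]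
      rw [show ([Sum.inr cp] : List (σ ⊕ π)).take 1 = [Sum.inr cp] from rfl]
      rw [show (S ++ [Sum.inr cp] : List (σ ⊕ π))
            = S ++ Sum.inr cp :: ([] : List (σ ⊕ π)) from rfl]
      rw [distinctParams_middle_of_not_mem (by simp [hm]), List.append_nil]
  · -- part (ii)
    intro p hp1 hp2 hcase
    obtain ⟨q, rfl⟩ : ∃ q, p = q + 1 := ⟨p - 1, by omega⟩
    have hq : q < S.length := by omega
    obtain ⟨x, hx⟩ : ∃ x, S[q]? = some x := ⟨S[q], List.getElem?_eq_getElem hq⟩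
    have hg1 : get1 S (q + 1) = x := by
      rw [get1, Nat.add_sub_cancel, List.getD_eq_getElem?_getD, hx, Option.getD_some]
    have hgetT : (Sum.inr cp :: S : List (σ ⊕ π))[q + 1]? = some x := hx
    cases x with
    | inl a =>
      rw [get1_encodeE_inl _ (q + 1) a hgetT, get1_encodeE_inl _ q a hx]
    | inr b =>
      rw [hg1] at hcase
      have hne : q + 1 ≠ rightPos S (Sum.inr b) := by
        rcases hcase with ⟨a, ha⟩ | h
        · exact absurd ha (by simp)
        · exact h
      have hmemb : Sum.inr b ∈ S := List.mem_of_getElem? hx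
      have hSq : S[q] = Sum.inr b := by
        have := (List.getElem?_eq_some_iff.mp hx).2
        simpa using this
      have hdq : Sum.inr b ∈ S.drop q := by
        rw [← List.getElem_cons_drop hq, hSq]
        exact List.mem_cons_self
      have hrq : q < rightPos S (Sum.inr b) := (mem_drop_iff_rightPos hmemb q).mp hdq
      have hbq : Sum.inr b ∈ S.drop (q + 1) :=
        (mem_drop_iff_rightPos hmemb (q + 1)).mpr (by omega)
      have hsubT : (Sum.inr cp :: S : List (σ ⊕ π)).length - (q + 1 + 1)
          = S.length - (q + 1) := by simp
      have hRT : rotR (Sum.inr cp :: S) (S.length - (q + 1))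
          = S.drop (q + 1) ++ (Sum.inr cp :: S.take (q + 1)) := by
        rw [rotR_eq _ _ (by simp; omega)]
        have e : (Sum.inr cp :: S : List (σ ⊕ π)).length - (S.length - (q + 1))
            = (q + 1) + 1 := by simp; omega
        rw [e, List.drop_succ_cons, List.take_succ_cons]
      have hRS : rotR S (S.length - (q + 1)) = S.drop (q + 1) ++ S.take (q + 1) := by
        rw [rotR_eq _ _ (by omega)]
        have e : S.length - (S.length - (q + 1)) = q + 1 := by omega
        rw [e]
      rw [get1_encodeE_inr _ (q + 1) b hgetT, get1_encodeE_inr _ q b hx, hsubT, hRT, hRS]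
      rw [indexOf_append_of_mem' hbq, indexOf_append_of_mem' hbq]
      have hidx : (S.drop (q + 1)).idxOf (Sum.inr b) + 1 ≤ (S.drop (q + 1)).length := by
        have := indexOf_lt_length' hbq; omega
      rw [List.take_append_of_le_length hidx, List.take_append_of_le_length hidx]
  · -- part (iii)
    intro p b hp1 hp2 hxb hrp
    obtain ⟨q, rfl⟩ : ∃ q, p = q + 1 := ⟨p - 1, by omega⟩
    have hq : q < S.length := by omega
    have hx : S[q]? = some (Sum.inr b) := by
      rw [get1, Nat.add_sub_cancel, List.getD_eq_getElem?_getD, List.getElem?_eq_getElem hq,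
        Option.getD_some] at hxb
      rw [List.getElem?_eq_getElem hq, hxb]
    have hmemb : Sum.inr b ∈ S := List.mem_of_getElem? hx
    have hgetT : (Sum.inr cp :: S : List (σ ⊕ π))[q + 1]? = some (Sum.inr b) := hx
    have hnotdrop : Sum.inr b ∉ S.drop (q + 1) := by
      intro hmem'
      have := (mem_drop_iff_rightPos hmemb (q + 1)).mp hmem'
      omega
    have hsubT : (Sum.inr cp :: S : List (σ ⊕ π)).length - (q + 1 + 1)
        = S.length - (q + 1) := by simp
    have hRT : rotR (Sum.inr cp :: S) (S.length - (q + 1))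
        = S.drop (q + 1) ++ (Sum.inr cp :: S.take (q + 1)) := by
      rw [rotR_eq _ _ (by simp; omega)]
      have e : (Sum.inr cp :: S : List (σ ⊕ π)).length - (S.length - (q + 1))
          = (q + 1) + 1 := by simp; omega
      rw [e, List.drop_succ_cons, List.take_succ_cons]
    have hRS : rotR S (S.length - (q + 1)) = S.drop (q + 1) ++ S.take (q + 1) := by
      rw [rotR_eq _ _ (by omega)]
      have e : S.length - (S.length - (q + 1)) = q + 1 := by omega
      rw [e]
    have hL : S.idxOf (Sum.inr b) ≤ q := indexOf_le_of_get?' hx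
    have hbtake : Sum.inr b ∈ S.take (q + 1) :=
      (mem_take_iff_indexOf' hmemb (q + 1)).mpr (by omega)
    have hidxtake : (S.take (q + 1)).idxOf (Sum.inr b) = S.idxOf (Sum.inr b) := by
      have h5 := indexOf_append_of_mem' (l₂ := S.drop (q + 1)) hbtake
      rw [List.take_append_drop] at h5
      exact h5.symm
    refine ⟨?_, ?_, ?_⟩
    · -- b = cp
      intro hbc
      subst hbc
      rw [get1_encodeE_inr _ (q + 1) b hgetT, hsubT, hRT]
      rw [indexOf_append_of_not_mem' hnotdrop, indexOf_cons_self', Nat.add_zero]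
      rw [List.take_length_add_append (l₁ := S.drop (q + 1)) 1]
      rw [show (Sum.inr b :: S.take (q + 1) : List (σ ⊕ π)).take 1
            = Sum.inr b :: ([] : List (σ ⊕ π)) from rfl]
      rw [distinctParams_middle_of_not_mem (by simp [hnotdrop]), List.append_nil]
    · -- b ≠ cp, +1 case
      intro hbc hcond
      rw [get1_encodeE_inr _ (q + 1) b hgetT, get1_encodeE_inr _ q b hx, hsubT, hRT, hRS]
      rw [indexOf_append_of_not_mem' hnotdrop, indexOf_append_of_not_mem' hnotdrop,
        indexOf_cons_ne' _ (fun h => hbc (Sum.inr.inj h).symm), hidxtake]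
      rw [show (S.drop (q + 1)).length + (S.idxOf (Sum.inr b) + 1) + 1
            = (S.drop (q + 1)).length + (S.idxOf (Sum.inr b) + 2) from by omega]
      rw [show (S.drop (q + 1)).length + S.idxOf (Sum.inr b) + 1
            = (S.drop (q + 1)).length + (S.idxOf (Sum.inr b) + 1) from by omega]
      rw [List.take_length_add_append, List.take_length_add_append, List.take_succ_cons, List.take_take,
        min_eq_left (by omega : S.idxOf (Sum.inr b) + 1 ≤ q + 1)]
      have hnot : ¬(Sum.inr cp ∈ S.drop (q + 1) ∨
          Sum.inr cp ∈ S.take (S.idxOf (Sum.inr b) + 1)) := by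
        rcases hcond with h0 | ⟨hA, hB, hC⟩
        · have hcpnot : Sum.inr cp ∉ S := leftPos_eq_zero_iff.mp h0
          rintro (h | h)
          · exact hcpnot (List.mem_of_mem_drop h)
          · exact hcpnot (List.mem_of_mem_take h)
        · have hcpS : Sum.inr cp ∈ S := by
            by_contra hno
            rw [leftPos_of_not_mem hno] at hA
            omega
          rw [leftPos_of_mem hmemb, leftPos_of_mem hcpS] at hA
          rintro (h | h)
          · have := (mem_drop_iff_rightPos hcpS (q + 1)).mp h
            omega
          · have := (mem_take_iff_indexOf' hcpS (S.idxOf (Sum.inr b) + 1)).mp h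
            omega
      rw [distinctParams_middle_of_not_mem hnot]
      simp [Sum.map]
    · -- b ≠ cp, equal case
      intro hbc hcond
      rw [get1_encodeE_inr _ (q + 1) b hgetT, get1_encodeE_inr _ q b hx, hsubT, hRT, hRS]
      rw [indexOf_append_of_not_mem' hnotdrop, indexOf_append_of_not_mem' hnotdrop,
        indexOf_cons_ne' _ (fun h => hbc (Sum.inr.inj h).symm), hidxtake]
      rw [show (S.drop (q + 1)).length + (S.idxOf (Sum.inr b) + 1) + 1
            = (S.drop (q + 1)).length + (S.idxOf (Sum.inr b) + 2) from by omega]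
      rw [show (S.drop (q + 1)).length + S.idxOf (Sum.inr b) + 1
            = (S.drop (q + 1)).length + (S.idxOf (Sum.inr b) + 1) from by omega]
      rw [List.take_length_add_append, List.take_length_add_append, List.take_succ_cons, List.take_take,
        min_eq_left (by omega : S.idxOf (Sum.inr b) + 1 ≤ q + 1)]
      push_neg at hcond
      obtain ⟨h0, hABC⟩ := hcond
      have hcpS : Sum.inr cp ∈ S := by
        by_contra hno
        exact h0 (leftPos_of_not_mem hno)
      have hB : leftPos S (Sum.inr cp) ≤ rightPos S (Sum.inr cp) :=
        leftPos_le_rightPos hcpS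
      have hmem : Sum.inr cp ∈ S.drop (q + 1) ∨
          Sum.inr cp ∈ S.take (S.idxOf (Sum.inr b) + 1) := by
        rcases Classical.em (leftPos S (Sum.inr b) < leftPos S (Sum.inr cp)) with hA | hA
        · -- then ¬C : rightPos b ≤ rightPos cp ; and rightPos cp ≠ q+1
          have hC := hABC hA hB
          have hne : rightPos S (Sum.inr cp) ≠ q + 1 := by
            intro he
            have hg := get?_rightPos hcpS
            rw [he, Nat.add_sub_cancel, hx] at hg
            exact hbc (Sum.inr.inj (Option.some.inj hg))
          left
          exact (mem_drop_iff_rightPos hcpS (q + 1)).mpr (by omega)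
        · right
          rw [leftPos_of_mem hmemb, leftPos_of_mem hcpS] at hA
          exact (mem_take_iff_indexOf' hcpS (S.idxOf (Sum.inr b) + 1)).mpr (by omega)
      rw [distinctParams_middle_of_mem hmem]
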